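/- Let Γ be an unsigned GKM graph and let α̃¹, α̃² be two lifts of its axial function α, with associated sign and invariant functions (ε¹,c¹) and (ε²,c²), and associated maps φ¹_e, φ²_e and axial function groups A¹(Γ), A²(Γ). Write α̃²(e) = d(e)·α̃¹(e) with d : E → {±1}. Then the maps F_v : ℤ star(v) → ℤ star(v), e ↦ d(e)·e, satisfy F_{t(e)} ∘ φ¹_e = φ²_e ∘ F_{i(e)} for every edge e, and hence the family (F_v)_{v∈V} induces a group isomorphism A¹(Γ) ≅ A²(Γ). In particular, the group of axial functions of an unsigned GKM graph does not depend on the choice of lift, up to group isomorphism. -/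

import Mathlib

attribute [local instance] Classical.propDecidable

/-- A graph with directed edges `E`, vertices `V`, edge reversal, and a
(combinatorial) connection `conn`, where `conn e e'` is the transport of an
edge `e'` with `ini e' = ini e` along the edge `e`. -/
structure ConnGraph (V : Type*) (E : Type*) where
  ini : E → V
  ter : E → V
  rev : E → E
  rev_ini : ∀ e, ini (rev e) = ter e
  rev_ter : ∀ e, ter (rev e) = ini e
  rev_rev : ∀ e, rev (rev e) = e
  conn : E → E → E
  conn_ini : ∀ e e', ini e' = ini e → ini (conn e e') = ter e
  conn_self : ∀ e, conn e e = rev e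
  conn_inv : ∀ e e', ini e' = ini e → conn (rev e) (conn e e') = e'

namespace ConnGraph

variable {V E : Type*} (G : ConnGraph V E)

/-- One step of adjacency along an edge. -/
def Step (a b : V) : Prop := ∃ e : E, G.ini e = a ∧ G.ter e = b

/-- The graph is connected. -/
def Connected : Prop := ∀ a b : V, Relation.ReflTransGen G.Step a b

/-- The graph is `n`-valent: every star has exactly `n` edges. -/
def NValent (n : ℕ) : Prop := ∀ v : V, {e : E | G.ini e = v}.ncard = n

/-- A sign function on a graph with connection: `ε e e'` plays the role of
`⟨ε(e), e'⟩` for `e'` in the star of `ini e`. -/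
def IsSignFunction (ε : E → E → ℤ) : Prop :=
  (∀ e e' : E, G.ini e' = G.ini e → ε e e' = 1 ∨ ε e e' = -1) ∧
  (∀ e : E, ε e e = 1) ∧
  (∀ e e' : E, G.ini e' = G.ini e → ε (G.rev e) (G.conn e e') = ε e e')

/-- An invariant function (relative to a sign function): `c e e'` plays the
role of `⟨c(e), e'⟩`. -/
def IsInvariantFunction (ε c : E → E → ℤ) : Prop :=
  (∀ e : E, c e e = -2) ∧
  (∀ e e' : E, G.ini e' = G.ini e →
    c e e' = ε (G.rev e) (G.conn e e') * c (G.rev e) (G.conn e e'))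

/-- A label function: an element of the group `L(Γ)`. -/
def IsLabelFunction (ε c : E → E → ℤ) (a : E → ℤ) : Prop :=
  ∀ e e' : E, G.ini e' = G.ini e →
    a (G.conn e e') = ε e e' * a e' + c e e' * a e

/-- `x : E → ℤ` represents an element of `ℤ star(v)`:
it is supported on the star of `v`. -/
def StarSupported (v : V) (x : E → ℤ) : Prop := ∀ e : E, G.ini e ≠ v → x e = 0

/-- An element of the group of axial functions `A(Γ)`: a tuple `(f v)_{v ∈ V}`
with `f v ∈ ℤ star(v)`, satisfying `f (t e) = φ_e (f (i e))` for every edge. -/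
def IsAxialTuple (ε c : E → E → ℤ) (f : V → E → ℤ) : Prop :=
  (∀ v : V, G.StarSupported v (f v)) ∧
  (∀ e e' : E, G.ini e' = G.ini e →
    f (G.ter e) (G.conn e e') = ε e e' * f (G.ini e) e' + f (G.ini e) e * c e e')

/-- The map `φ_e : ℤ star(i e) → ℤ star(t e)`,
`φ_e(x) = ∇_e (ε(e)·x + ⟨x, e⟩·c(e))`. -/
noncomputable def phi (ε c : E → E → ℤ) (e : E) (x : E → ℤ) : E → ℤ := fun e'' =>
  if G.ini e'' = G.ter e then
    ε e (G.conn (G.rev e) e'') * x (G.conn (G.rev e) e'') +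
      x e * c e (G.conn (G.rev e) e'')
  else 0

/-- `φ_γ` for an edge path `γ = (e₁, …, e_q)`: the composite
`φ_{e_q} ∘ ⋯ ∘ φ_{e₁}`. -/
noncomputable def phiList (ε c : E → E → ℤ) : List E → (E → ℤ) → (E → ℤ)
  | [], x => x
  | e :: l, x => phiList ε c l (G.phi ε c e x)

/-- The parallel transport (monodromy) operator `Π_γ = ∇_{e_q} ∘ ⋯ ∘ ∇_{e₁}`
along an edge path, on edges. -/
def transportList : List E → E → E
  | [], x => x
  | e :: l, x => transportList l (G.conn e x)

/-- `IsPath u w l`: the list of edges `l` is an edge path from `u` to `w`. -/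
def IsPath : V → V → List E → Prop
  | u, w, [] => u = w
  | u, w, e :: l => G.ini e = u ∧ IsPath (G.ter e) w l

/-- Elementary homotopy of edge paths: deletion of a backtrack `(e, ē)`. -/
inductive HomotopyStep : List E → List E → Prop
  | backtrack (l₁ l₂ : List E) (e : E) :
      HomotopyStep (l₁ ++ e :: G.rev e :: l₂) (l₁ ++ l₂)

/-- Homotopy of edge paths: the equivalence relation generated by insertion
and deletion of backtracks. -/
def Homotopic : List E → List E → Prop := Relation.EqvGen G.HomotopyStep

/-- A 2-face: a nonempty connected 2-valent subgraph (given by its set of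
edges, closed under reversal) which is invariant under the connection. -/
def IsTwoFace (F : Set E) : Prop :=
  F.Nonempty ∧
  (∀ e ∈ F, G.rev e ∈ F) ∧
  (∀ e ∈ F, {e' : E | e' ∈ F ∧ G.ini e' = G.ini e}.ncard = 2) ∧
  (∀ e ∈ F, ∀ e' ∈ F, G.ini e' = G.ini e → G.conn e e' ∈ F) ∧
  (∀ e ∈ F, ∀ e' ∈ F, ∃ l : List E,
    (∀ x ∈ l, x ∈ F) ∧ G.IsPath (G.ini e) (G.ini e') l)

/-- `f` is a boundary cycle of the 2-face `F`, based at `w`: a closed edge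
path at `w` traversing each geometric edge of `F` exactly once. -/
def IsFaceBoundary (F : Set E) (w : V) (f : List E) : Prop :=
  G.IsTwoFace F ∧ f ≠ [] ∧ G.IsPath w w f ∧ (∀ e ∈ f, e ∈ F) ∧
  f.Nodup ∧ (∀ e ∈ f, G.rev e ∉ f) ∧ (∀ e ∈ F, e ∈ f ∨ G.rev e ∈ f)

/-- A conjugated 2-face at the base vertex `v`: a loop of the form
`g · f · g⁻¹` where `g` is an edge path from `v` and `f` is a boundary cycle
of a 2-face based at the endpoint of `g`. -/
def ConjFaceLoop (v : V) (l : List E) : Prop :=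
  ∃ (w : V) (g f : List E) (F : Set E),
    G.IsPath v w g ∧ G.IsFaceBoundary F w f ∧
    l = g ++ f ++ (g.reverse.map G.rev)

/-- The conjugated 2-faces generate the fundamental group (the edge-path
group): every closed edge path is homotopic to a concatenation of conjugated
2-face loops. -/
def FacesGeneratePi1 : Prop :=
  ∀ (v : V) (l : List E), G.IsPath v v l →
    ∃ ls : List (List E), (∀ m ∈ ls, G.ConjFaceLoop v m) ∧
      G.Homotopic l ls.flatten

end ConnGraph

/-- `(G, lab)` is an abstract unsigned GKM graph, where `lab` is a chosen lift
`α̃ : E → ℤ^k` of the unsigned axial function `α : E → ℤ^k/±1`. -/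
structure IsUnsignedGKM {V E : Type*} (G : ConnGraph V E) {k : ℕ}
    (lab : E → Fin k → ℤ) : Prop where
  connected : G.Connected
  lab_ne : ∀ e : E, lab e ≠ 0
  lab_rev : ∀ e : E, lab (G.rev e) = -lab e
  indep₂ : ∀ e e' : E, G.ini e' = G.ini e → e ≠ e' →
    LinearIndependent ℚ ![(fun j => (lab e j : ℚ)), (fun j => (lab e' j : ℚ))]
  congru : ∀ e e' : E, G.ini e' = G.ini e →
    ∃ s m : ℤ, (s = 1 ∨ s = -1) ∧ lab (G.conn e e') = s • lab e' + m • lab e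

/-- The GKM₃ condition: any three labels at a common vertex are linearly
independent over `ℚ`. -/
def IsGKM3 {V E : Type*} (G : ConnGraph V E) {k : ℕ} (lab : E → Fin k → ℤ) : Prop :=
  ∀ e₁ e₂ e₃ : E, G.ini e₂ = G.ini e₁ → G.ini e₃ = G.ini e₁ →
    e₁ ≠ e₂ → e₁ ≠ e₃ → e₂ ≠ e₃ →
    LinearIndependent ℚ
      ![(fun j => (lab e₁ j : ℚ)), (fun j => (lab e₂ j : ℚ)),
        (fun j => (lab e₃ j : ℚ))]

/-- `(ε, c)` are the sign and integer data associated to the lift `lab` of the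
axial function, via the congruence relation
`α̃(∇_e e') = ⟨ε(e),e'⟩·α̃(e') + ⟨c(e),e'⟩·α̃(e)`, normalized by
`⟨ε(e),e⟩ = 1` and `⟨c(e),e⟩ = -2`. -/
def IsCompatibleData {V E : Type*} (G : ConnGraph V E) {k : ℕ}
    (lab : E → Fin k → ℤ) (ε c : E → E → ℤ) : Prop :=
  (∀ e e' : E, G.ini e' = G.ini e → ε e e' = 1 ∨ ε e e' = -1) ∧
  (∀ e : E, ε e e = 1) ∧ (∀ e : E, c e e = -2) ∧
  (∀ e e' : E, G.ini e' = G.ini e →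
    lab (G.conn e e') = ε e e' • lab e' + c e e' • lab e)

/-- The axial function is almost effective: the `ℤ`-span of its image has
finite index in `ℤ^k`. -/
def AlmostEffective {E : Type*} {k : ℕ} (lab : E → Fin k → ℤ) : Prop :=
  (Submodule.span ℤ (Set.range lab)).toAddSubgroup.index ≠ 0

/-- The axial function is effective: the `ℤ`-span of its image is all
of `ℤ^k`. -/
def Effective {E : Type*} {k : ℕ} (lab : E → Fin k → ℤ) : Prop :=
  Submodule.span ℤ (Set.range lab) = ⊤

/-- For two lifts `lab₁`, `lab₂ = d • lab₁` of the axial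
function of an unsigned GKM graph, with associated data `(ε₁,c₁)`, `(ε₂,c₂)`
and maps `φ¹_e`, `φ²_e`, the componentwise multiplication maps
`F_v : ℤ star(v) → ℤ star(v)`, `e ↦ d(e)·e`, intertwine `φ¹` and `φ²`, and
hence induce a group isomorphism `A¹(Γ) ≅ A²(Γ)`: the group of axial
functions is independent of the choice of lift. -/
theorem axialGroup_independent_of_lift {V E : Type*} {n k : ℕ}
    (G : ConnGraph V E) (lab₁ lab₂ : E → Fin k → ℤ)
    (h₁ : IsUnsignedGKM G lab₁) (h₂ : IsUnsignedGKM G lab₂)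
    (hval : G.NValent n)
    (d : E → ℤ) (hd : ∀ e : E, d e = 1 ∨ d e = -1)
    (hlift : ∀ e : E, lab₂ e = d e • lab₁ e)
    (ε₁ c₁ ε₂ c₂ : E → E → ℤ)
    (hdata₁ : IsCompatibleData G lab₁ ε₁ c₁)
    (hdata₂ : IsCompatibleData G lab₂ ε₂ c₂) :
    (∀ (e : E) (x : E → ℤ),
      (fun e' => d e' * G.phi ε₁ c₁ e x e') =
        G.phi ε₂ c₂ e (fun e' => d e' * x e')) ∧
    ∃ Φ : {f : V → E → ℤ // G.IsAxialTuple ε₁ c₁ f} ≃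
          {f : V → E → ℤ // G.IsAxialTuple ε₂ c₂ f},
      ∀ f, (Φ f).1 = fun v e => d e * f.1 v e := by

  classical
  have hdsq : ∀ e : E, d e * d e = 1 := fun e => by rcases hd e with h | h <;> simp [h]
  have hdrev : ∀ e : E, d (G.rev e) = d e := by
    have hkey : ∀ e : E, d (G.rev e) = -d e → lab₁ e = 0 := by
      intro e hne
      funext j
      have h1 := hlift (G.rev e)
      rw [h₂.lab_rev, h₁.lab_rev, hlift e, hne] at h1
      have h2 := congrFun h1 j
      simp only [Pi.neg_apply, Pi.smul_apply, smul_eq_mul, neg_mul, neg_neg,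
        Pi.zero_apply] at h2 ⊢
      rcases hd e with he | he <;> rw [he] at h2 <;> linarith
    intro e
    by_contra hne
    have hneg : d (G.rev e) = -d e := by
      rcases hd e with he | he <;> rcases hd (G.rev e) with hr | hr <;> simp_all
    exact h₁.lab_ne e (hkey e hneg)
  have key : ∀ e e' : E, G.ini e' = G.ini e →
      ε₂ e e' = d (G.conn e e') * ε₁ e e' * d e' ∧
      c₂ e e' = d (G.conn e e') * c₁ e e' * d e := by
    intro e e' h
    by_cases hee : e = e'
    · subst hee
      rw [G.conn_self, hdata₁.2.1, hdata₂.2.1, hdata₁.2.2.1, hdata₂.2.2.1, hdrev]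
      constructor <;> nlinarith [hdsq e]
    · have H1 := hdata₁.2.2.2 e e' h
      have H2 := hdata₂.2.2.2 e e' h
      rw [hlift, hlift, hlift] at H2
      have hz : ∀ j : Fin k,
          (d (G.conn e e') * c₁ e e' - c₂ e e' * d e) * lab₁ e j
          + (d (G.conn e e') * ε₁ e e' - ε₂ e e' * d e') * lab₁ e' j = 0 := by
        intro j
        have h1 := congrFun H1 j
        have h2 := congrFun H2 j
        simp only [Pi.smul_apply, Pi.add_apply, smul_eq_mul] at h1 h2
        linear_combination h2 - d (G.conn e e') * h1
      have li := h₁.indep₂ e e' h hee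
      rw [Fintype.linearIndependent_iff] at li
      have hli := li ![((d (G.conn e e') * c₁ e e' - c₂ e e' * d e : ℤ) : ℚ),
          ((d (G.conn e e') * ε₁ e e' - ε₂ e e' * d e' : ℤ) : ℚ)] ?h0
      case h0 =>
        funext j
        have := hz j
        simp only [Fin.sum_univ_two, Matrix.cons_val_zero, Matrix.cons_val_one,
          Matrix.head_cons, Pi.add_apply, Pi.smul_apply, smul_eq_mul, Pi.zero_apply]
        exact_mod_cast this
      have e1 : d (G.conn e e') * c₁ e e' - c₂ e e' * d e = 0 := by
        have := hli 0
        simp only [Matrix.cons_val_zero] at this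
        exact_mod_cast this
      have e2 : d (G.conn e e') * ε₁ e e' - ε₂ e e' * d e' = 0 := by
        have := hli 1
        simp only [Matrix.cons_val_one, Matrix.head_cons, Matrix.cons_val_zero] at this
        exact_mod_cast this
      constructor
      · linear_combination -(d e' * e2) - ε₂ e e' * hdsq e'
      · linear_combination -(d e * e1) - c₂ e e' * hdsq e
  have keyrev : ∀ e e' : E, G.ini e' = G.ini e →
      ε₁ e e' = d (G.conn e e') * ε₂ e e' * d e' ∧
      c₁ e e' = d (G.conn e e') * c₂ e e' * d e := by
    intro e e' h
    obtain ⟨k1, k2⟩ := key e e' h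
    constructor
    · linear_combination -(d (G.conn e e') * d e' * k1)
        - ε₁ e e' * d e' * d e' * hdsq (G.conn e e')
        - ε₁ e e' * hdsq e'
    · linear_combination -(d (G.conn e e') * d e * k2)
        - c₁ e e' * d e * d e * hdsq (G.conn e e')
        - c₁ e e' * hdsq e
  have hinter : ∀ (e : E) (x : E → ℤ),
      (fun e' => d e' * G.phi ε₁ c₁ e x e') =
        G.phi ε₂ c₂ e (fun e' => d e' * x e') := by
    intro e x
    funext e''
    simp only [ConnGraph.phi]
    by_cases ht : G.ini e'' = G.ter e
    · rw [if_pos ht, if_pos ht]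
      set a := G.conn (G.rev e) e'' with ha
      have hia : G.ini a = G.ini e := by
        have : G.ini (G.conn (G.rev e) e'') = G.ter (G.rev e) :=
          G.conn_ini (G.rev e) e'' (by rw [ht, G.rev_ini])
        rw [← ha, G.rev_ter] at this; exact this
      have hca : G.conn e a = e'' := by
        have := G.conn_inv (G.rev e) e'' (by rw [ht, G.rev_ini])
        rw [G.rev_rev] at this
        rw [ha, this]
      obtain ⟨k1, k2⟩ := key e a hia
      rw [hca] at k1 k2
      rw [k1, k2]
      linear_combination -(d e'' * ε₁ e a * x a * hdsq a)
        - d e'' * c₁ e a * x e * hdsq e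
    · rw [if_neg ht, if_neg ht, mul_zero]
  refine ⟨hinter, ?_⟩
  have trans : ∀ (ε c ε' c' : E → E → ℤ),
      (∀ e e' : E, G.ini e' = G.ini e →
        ε' e e' = d (G.conn e e') * ε e e' * d e' ∧
        c' e e' = d (G.conn e e') * c e e' * d e) →
      ∀ f : V → E → ℤ, G.IsAxialTuple ε c f →
        G.IsAxialTuple ε' c' (fun v e => d e * f v e) := by
    intro ε c ε' c' hk f hf
    obtain ⟨hs, hr⟩ := hf
    constructor
    · intro v e he
      simp [hs v e he]
    · intro e e' h
      obtain ⟨hε, hc⟩ := hk e e' h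
      have hre := hr e e' h
      rw [hε, hc]
      linear_combination d (G.conn e e') * hre
        - d (G.conn e e') * ε e e' * f (G.ini e) e' * hdsq e'
        - d (G.conn e e') * c e e' * f (G.ini e) e * hdsq e
  refine ⟨{
      toFun := fun f => ⟨fun v e => d e * f.1 v e, trans ε₁ c₁ ε₂ c₂ key f.1 f.2⟩
      invFun := fun f => ⟨fun v e => d e * f.1 v e, trans ε₂ c₂ ε₁ c₁ keyrev f.1 f.2⟩
      left_inv := fun f => by
        apply Subtype.ext
        funext v e
        simp only
        rw [← mul_assoc, hdsq e, one_mul]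
      right_inv := fun f => by
        apply Subtype.ext
        funext v e
        simp only
        rw [← mul_assoc, hdsq e, one_mul] }, fun f => rfl⟩
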